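/- Let α > 0 and let ψ, M : ℝ → ℝ be twice differentiable functions with ψ(0) = 0 and M(0) = 1 that satisfy ψ(α z) M(z) = z M(z+1) for all real z. Set p := ψ'(0) and assume p > 0. Then 2 (α p)^{-2} ( -M'(0) + (α p)^{-1} M'(1) ) = ψ''(0) / (α p³). In particular, the asymptotic variance v² := 2 (α p)^{-2}( -M'(0) + (α p)^{-1} M'(1) ) equals σ²/(α p³) with σ² := ψ''(0). -/

import Mathlib

/-- If `ψ, M : ℝ → ℝ` are twice differentiable with `ψ 0 = 0`, `M 0 = 1`, satisfy the
recurrence `ψ (α z) * M z = z * M (z + 1)` for all `z`, where `α > 0`, and `p := ψ'(0) > 0`,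
then the asymptotic variance `v² = 2 (α p)⁻² (-M'(0) + (α p)⁻¹ M'(1))` equals
`σ²/(α p³)` with `σ² = ψ''(0)`. -/
theorem clock_variance_formula
    (α : ℝ) (hα : 0 < α) (ψ M : ℝ → ℝ)
    (hψ1 : Differentiable ℝ ψ) (hψ2 : Differentiable ℝ (deriv ψ))
    (hM1 : Differentiable ℝ M) (hM2 : Differentiable ℝ (deriv M))
    (hψ0 : ψ 0 = 0) (hM0 : M 0 = 1)
    (hrec : ∀ z : ℝ, ψ (α * z) * M z = z * M (z + 1))
    (p : ℝ) (hp : p = deriv ψ 0) (hppos : 0 < p) :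
    2 * ((α * p) ^ 2)⁻¹ * (-(deriv M 0) + (α * p)⁻¹ * deriv M 1)
      = deriv (deriv ψ) 0 / (α * p ^ 3) := by
  -- derivative of the left side of the recurrence
  have hf : ∀ z : ℝ, HasDerivAt (fun z => ψ (α * z) * M z)
      (α * deriv ψ (α * z) * M z + ψ (α * z) * deriv M z) z := by
    intro z
    have hlin : HasDerivAt (fun z : ℝ => α * z) α z := by
      simpa using (hasDerivAt_id z).const_mul α
    have h1 : HasDerivAt (fun z => ψ (α * z)) (deriv ψ (α * z) * α) z :=
      (hψ1 (α * z)).hasDerivAt.comp z hlin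
    have := h1.mul (hM1 z).hasDerivAt
    exact this.congr_deriv (by ring)
  -- derivative of the right side of the recurrence
  have hg : ∀ z : ℝ, HasDerivAt (fun z => z * M (z + 1))
      (M (z + 1) + z * deriv M (z + 1)) z := by
    intro z
    have h1 : HasDerivAt (fun z : ℝ => M (z + 1)) (deriv M (z + 1)) z := by
      exact ((hM1 (z + 1)).hasDerivAt.comp z ((hasDerivAt_id z).add_const 1)).congr_deriv (by simp)
    have := (hasDerivAt_id z).mul h1
    exact this.congr_deriv (by simp [id])
  have hfg : (fun z => ψ (α * z) * M z) = (fun z => z * M (z + 1)) := funext hrec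
  have hderiv_eq : (fun z => α * deriv ψ (α * z) * M z + ψ (α * z) * deriv M z)
      = (fun z => M (z + 1) + z * deriv M (z + 1)) := by
    funext z
    have := (hf z).deriv
    rw [hfg] at this
    rw [← this, (hg z).deriv]
  -- second derivative of the left side at 0
  have hf2 : HasDerivAt (fun z => α * deriv ψ (α * z) * M z + ψ (α * z) * deriv M z)
      (α ^ 2 * deriv (deriv ψ) 0 + 2 * α * p * deriv M 0) 0 := by
    have hlin : HasDerivAt (fun z : ℝ => α * z) α 0 := by
      simpa using (hasDerivAt_id (0 : ℝ)).const_mul α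
    have h1 : HasDerivAt (fun z => deriv ψ (α * z)) (deriv (deriv ψ) (α * 0) * α) 0 :=
      (hψ2 (α * 0)).hasDerivAt.comp 0 hlin
    have h1' : HasDerivAt (fun z => α * deriv ψ (α * z)) (α * (deriv (deriv ψ) (α * 0) * α)) 0 :=
      h1.const_mul α
    have h2 : HasDerivAt (fun z => ψ (α * z)) (deriv ψ (α * 0) * α) 0 :=
      (hψ1 (α * 0)).hasDerivAt.comp 0 hlin
    have := (h1'.mul (hM1 0).hasDerivAt).add (h2.mul (hM2 0).hasDerivAt)
    have h0 : α * (0 : ℝ) = 0 := by ring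
    rw [h0] at this
    exact this.congr_deriv (by rw [hψ0, hM0, hp]; ring)
  -- second derivative of the right side at 0
  have hg2 : HasDerivAt (fun z => M (z + 1) + z * deriv M (z + 1))
      (2 * deriv M 1) 0 := by
    have h1 : HasDerivAt (fun z : ℝ => M (z + 1)) (deriv M ((0:ℝ) + 1)) 0 := by
      exact ((hM1 ((0:ℝ) + 1)).hasDerivAt.comp 0 ((hasDerivAt_id (0:ℝ)).add_const 1)).congr_deriv (by simp)
    have h2 : HasDerivAt (fun z : ℝ => deriv M (z + 1)) (deriv (deriv M) ((0:ℝ) + 1)) 0 := by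
      exact ((hM2 ((0:ℝ) + 1)).hasDerivAt.comp 0 ((hasDerivAt_id (0:ℝ)).add_const 1)).congr_deriv (mul_one _)
    have := h1.add ((hasDerivAt_id (0:ℝ)).mul h2)
    exact this.congr_deriv (by simp only [id, zero_add, one_mul, zero_mul, add_zero]; ring)
  have key : α ^ 2 * deriv (deriv ψ) 0 + 2 * α * p * deriv M 0 = 2 * deriv M 1 := by
    have := hf2.deriv
    rw [hderiv_eq] at this
    rw [← this, hg2.deriv]
  have hM1' : deriv M 1 = (α ^ 2 * deriv (deriv ψ) 0 + 2 * α * p * deriv M 0) / 2 := by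
    linarith
  have hαp : α * p ≠ 0 := by positivity
  rw [hM1']
  field_simp
  ring
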